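/- For all x ∈ ℝ and n ∈ ℕ with n ≥ 1, |e^{ix} - ∑_{k=0}^{n-1} (ix)^k/k! - (n/(2(n+1))) · (ix)^n/n!| ≤ ((n+2)/(2(n+1))) · |x|^n/n!. -/

import Mathlib

open Complex Real Finset

lemma hasDerivAt_term (k : ℕ) (c : ℂ) (x : ℝ) :
    HasDerivAt (fun y : ℝ => c * (I*(y:ℂ))^(k+1)) (c * I^(k+1) * ((k+1) * (x:ℂ)^k)) x := by
  have h2 := (hasDerivAt_pow (k+1) x).ofReal_comp
  have h3 := h2.const_mul (c * I^(k+1))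
  have e : (fun y : ℝ => c * (I*(y:ℂ))^(k+1)) = fun y : ℝ => c * I^(k+1) * ((y^(k+1) : ℝ) : ℂ) := by
    funext y; rw [mul_pow]; push_cast; ring
  rw [e]
  refine h3.congr_deriv ?_
  simp only [Nat.add_sub_cancel]; push_cast; ring

lemma hasDerivAt_S (n : ℕ) (x : ℝ) :
    HasDerivAt (fun y : ℝ => ∑ k ∈ range (n+1), (I*(y:ℂ))^k / (Nat.factorial k))
      (I * ∑ k ∈ range n, (I*(x:ℂ))^k / (Nat.factorial k)) x := by
  have h : ∀ y : ℝ, ∑ k ∈ range (n+1), (I*(y:ℂ))^k / (Nat.factorial k)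
      = (∑ k ∈ range n, (1/(Nat.factorial (k+1) : ℂ)) * (I*(y:ℂ))^(k+1)) + 1 := by
    intro y
    rw [Finset.sum_range_succ']
    simp [div_eq_mul_inv, mul_comm]
  simp only [h]
  have H : HasDerivAt (fun y : ℝ => ∑ k ∈ range n, (1/(Nat.factorial (k+1) : ℂ)) * (I*(y:ℂ))^(k+1))
      (∑ k ∈ range n, (1/(Nat.factorial (k+1) : ℂ)) * I^(k+1) * ((k+1) * (x:ℂ)^k)) x :=
    HasDerivAt.fun_sum (fun k _ => hasDerivAt_term k _ x)
  have heq : (∑ k ∈ range n, (1/(Nat.factorial (k+1) : ℂ)) * I^(k+1) * ((k+1) * (x:ℂ)^k))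
      = I * ∑ k ∈ range n, (I*(x:ℂ))^k / (Nat.factorial k) := by
    rw [Finset.mul_sum]
    apply Finset.sum_congr rfl
    intro k _
    rw [mul_pow]
    have : (Nat.factorial (k+1) : ℂ) = (k+1) * Nat.factorial k := by
      push_cast [Nat.factorial_succ]; ring
    rw [this]
    have hk : ((k:ℂ)+1) ≠ 0 := by
      exact_mod_cast Nat.succ_ne_zero k
    have hf : (Nat.factorial k : ℂ) ≠ 0 := by
      exact_mod_cast Nat.cast_ne_zero.mpr (Nat.factorial_ne_zero k)
    field_simp
    ring
  rw [← heq]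
  exact H.add_const 1

noncomputable def Cf (n : ℕ) (x : ℝ) : ℂ :=
  (-I)^n * (Nat.factorial n) * (Complex.exp (I*x) - ∑ k ∈ range n, (I*(x:ℂ))^k / (Nat.factorial k))

noncomputable def Pf (n : ℕ) (x : ℝ) : ℝ := (Cf n x).re
noncomputable def Qf (n : ℕ) (x : ℝ) : ℝ := (Cf n x).im
noncomputable def Psi (n : ℕ) (x : ℝ) : ℝ := (n+2)*x^n - (n+2)*Pf n x - x * Qf n x

lemma hasDerivAt_exp_I (x : ℝ) : HasDerivAt (fun y : ℝ => Complex.exp (I*(y:ℂ))) (I * Complex.exp (I*(x:ℂ))) x := by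
  have h1 : HasDerivAt (fun y : ℝ => I*(y:ℂ)) I x := by
    simpa using ((hasDerivAt_id x).ofReal_comp.const_mul I)
  simpa [mul_comm] using h1.cexp

lemma Cf_succ (n : ℕ) (x : ℝ) :
    Cf (n+1) x = -I * (n+1) * (Cf n x - (x:ℝ)^n) := by
  unfold Cf
  rw [Finset.sum_range_succ]
  have hf : (Nat.factorial n : ℂ) ≠ 0 := by
    exact_mod_cast Nat.factorial_ne_zero n
  have hbc : ((-I)^n) * ((I:ℂ)^n) = 1 := by
    rw [← mul_pow]; simp [neg_mul, Complex.I_mul_I]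
  have hfac : (Nat.factorial (n+1) : ℂ) = (n+1) * Nat.factorial n := by
    push_cast [Nat.factorial_succ]; ring
  rw [hfac, pow_succ, mul_pow I ((x:ℂ)) n]
  push_cast
  field_simp
  linear_combination ((x:ℂ)^n) * hbc

lemma hasDerivAt_Cf (n : ℕ) (x : ℝ) :
    HasDerivAt (Cf (n+1)) (I * Cf (n+1) x + ((n:ℝ)+1) * (x:ℝ)^n) x := by
  have hd := ((hasDerivAt_exp_I x).sub (hasDerivAt_S n x)).const_mul
      ((-I)^(n+1) * (Nat.factorial (n+1) : ℂ))
  have hf : (Nat.factorial n : ℂ) ≠ 0 := by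
    exact_mod_cast Nat.factorial_ne_zero n
  have hfac : (Nat.factorial (n+1) : ℂ) = ((n:ℂ)+1) * Nat.factorial n := by
    push_cast [Nat.factorial_succ]; ring
  have hbc1 : ((-I)^(n+1)) * ((I:ℂ)^(n+1)) = 1 := by
    rw [← mul_pow]; simp [neg_mul, Complex.I_mul_I]
  have key : I * (((-I)^(n+1) * ((Nat.factorial (n+1)):ℂ)) * ((I*(x:ℂ))^n / ((Nat.factorial n):ℂ)))
      = ((n:ℂ)+1) * (x:ℂ)^n := by
    rw [mul_pow, hfac]
    field_simp
    linear_combination ((x:ℂ)^n) * hbc1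
  have heq : ((-I)^(n+1) * (Nat.factorial (n+1) : ℂ)) *
      (I * Complex.exp (I*(x:ℂ)) - I * ∑ k ∈ range n, (I*(x:ℂ))^k / (Nat.factorial k))
      = I * Cf (n+1) x + ((n:ℝ)+1) * (x:ℝ)^n := by
    unfold Cf
    rw [Finset.sum_range_succ]
    push_cast
    linear_combination key
  rw [heq] at hd
  unfold Cf
  exact hd

lemma HasDerivAt.creal {f : ℝ → ℂ} {c : ℂ} {x : ℝ} (hf : HasDerivAt f c x) :
    HasDerivAt (fun y => (f y).re) c.re x := by
  have := (Complex.reCLM.hasFDerivAt (x := f x)).comp x hf.hasFDerivAt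
  have h2 := this.hasDerivAt
  simpa [Function.comp_def] using h2

lemma HasDerivAt.cimag {f : ℝ → ℂ} {c : ℂ} {x : ℝ} (hf : HasDerivAt f c x) :
    HasDerivAt (fun y => (f y).im) c.im x := by
  have := (Complex.imCLM.hasFDerivAt (x := f x)).comp x hf.hasFDerivAt
  have h2 := this.hasDerivAt
  simpa [Function.comp_def] using h2

lemma hasDerivAt_Pf (n : ℕ) (x : ℝ) :
    HasDerivAt (Pf (n+1)) (((n:ℝ)+1) * x^n - Qf (n+1) x) x := by
  have h := (hasDerivAt_Cf n x).creal
  have : (I * Cf (n+1) x + ((n:ℝ)+1) * (x:ℝ)^n).re = ((n:ℝ)+1) * x^n - Qf (n+1) x := by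
    simp [Qf, Complex.add_re, Complex.mul_re, ← Complex.ofReal_pow]
    ring
  rw [this] at h
  exact h

lemma hasDerivAt_Qf (n : ℕ) (x : ℝ) :
    HasDerivAt (Qf (n+1)) (Pf (n+1) x) x := by
  have h := (hasDerivAt_Cf n x).cimag
  have : (I * Cf (n+1) x + ((n:ℝ)+1) * (x:ℝ)^n).im = Pf (n+1) x := by
    simp [Pf, Complex.add_im, Complex.mul_im, ← Complex.ofReal_pow]
  rw [this] at h
  exact h

lemma Pf_succ (n : ℕ) (x : ℝ) : Pf (n+1) x = ((n:ℝ)+1) * Qf n x := by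
  unfold Pf Qf
  rw [Cf_succ]
  simp [Complex.mul_re, ← Complex.ofReal_pow]
  all_goals ring

lemma Qf_succ (n : ℕ) (x : ℝ) : Qf (n+1) x = ((n:ℝ)+1) * (x^n - Pf n x) := by
  unfold Qf Pf
  rw [Cf_succ]
  simp [Complex.mul_im, ← Complex.ofReal_pow]
  all_goals ring

lemma Cf_zero (n : ℕ) : Cf (n+1) 0 = 0 := by
  unfold Cf
  have : ∑ k ∈ range (n+1), (I*((0:ℝ):ℂ))^k / (Nat.factorial k) = 1 := by
    rw [Finset.sum_range_succ']
    simp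
  rw [this]
  simp

lemma hasDerivAt_Psi (n : ℕ) (x : ℝ) :
    HasDerivAt (Psi (n+1)) (((n:ℝ)+1) * Psi n x) x := by
  have hP := hasDerivAt_Pf n x
  have hQ := hasDerivAt_Qf n x
  have hxp : HasDerivAt (fun y : ℝ => ((n:ℝ)+1+2) * y^(n+1))
      (((n:ℝ)+1+2) * (((n:ℝ)+1) * x^n)) x := by
    simpa using ((hasDerivAt_pow (n+1) x).const_mul ((n:ℝ)+1+2))
  have hxQ : HasDerivAt (fun y : ℝ => y * Qf (n+1) y)
      (Qf (n+1) x + x * Pf (n+1) x) x := by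
    simpa using ((hasDerivAt_id x).fun_mul hQ)
  have h := (hxp.fun_sub (hP.const_mul ((n:ℝ)+1+2))).fun_sub hxQ
  have heq : (((n:ℝ)+1+2) * (((n:ℝ)+1) * x^n) - ((n:ℝ)+1+2) * (((n:ℝ)+1) * x^n - Qf (n+1) x))
      - (Qf (n+1) x + x * Pf (n+1) x) = ((n:ℝ)+1) * Psi n x := by
    rw [Pf_succ, Qf_succ]
    unfold Psi
    push_cast
    ring
  rw [heq] at h
  have hfun : ∀ y : ℝ, (((n:ℝ)+1+2) * y^(n+1) - ((n:ℝ)+1+2) * Pf (n+1) y) - y * Qf (n+1) y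
      = Psi (n+1) y := by
    intro y; unfold Psi; push_cast; ring
  simpa [hfun] using h

lemma nonneg_of_deriv {f g : ℝ → ℝ} (hd : ∀ y, HasDerivAt f (g y) y) (h0 : f 0 = 0)
    (hg : ∀ y, 0 ≤ y → 0 ≤ g y) : ∀ x, 0 ≤ x → 0 ≤ f x := by
  intro x hx
  have hmono : MonotoneOn f (Set.Ici (0:ℝ)) := by
    apply monotoneOn_of_deriv_nonneg (convex_Ici 0)
    · exact (Differentiable.continuous fun y => (hd y).differentiableAt).continuousOn
    · exact fun y _ => ((hd y).differentiableAt).differentiableWithinAt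
    · intro y hy
      rw [(hd y).deriv]
      exact hg y (le_of_lt (by simpa using hy))
  have := hmono (Set.self_mem_Ici) (by exact hx) hx
  rwa [h0] at this

lemma nonneg_of_deriv_Icc {b : ℝ} {f g : ℝ → ℝ} (hd : ∀ y, HasDerivAt f (g y) y) (h0 : f 0 = 0)
    (hg : ∀ y, 0 ≤ y → y ≤ b → 0 ≤ g y) : ∀ x, 0 ≤ x → x ≤ b → 0 ≤ f x := by
  intro x hx hxb
  have hmono : MonotoneOn f (Set.Icc (0:ℝ) b) := by
    apply monotoneOn_of_deriv_nonneg (convex_Icc 0 b)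
    · exact (Differentiable.continuous fun y => (hd y).differentiableAt).continuousOn
    · exact fun y _ => ((hd y).differentiableAt).differentiableWithinAt
    · intro y hy
      rw [interior_Icc] at hy
      rw [(hd y).deriv]
      exact hg y (le_of_lt hy.1) (le_of_lt hy.2)
  have := hmono (Set.left_mem_Icc.mpr (le_trans hx hxb)) (Set.mem_Icc.mpr ⟨hx, hxb⟩) hx
  rwa [h0] at this


lemma Pf_one (x : ℝ) : Pf 1 x = Real.sin x := by
  unfold Pf Cf
  simp [Complex.mul_re, Complex.exp_re, Complex.exp_im]

lemma Qf_one (x : ℝ) : Qf 1 x = 1 - Real.cos x := by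
  unfold Qf Cf
  simp [Complex.mul_im, Complex.exp_re, Complex.exp_im]

-- sin x - x cos x ≥ 0 on [0, π]
lemma aux1 : ∀ x : ℝ, 0 ≤ x → x ≤ Real.pi → 0 ≤ Real.sin x - x * Real.cos x := by
  apply nonneg_of_deriv_Icc (g := fun y => y * Real.sin y)
  · intro y
    simpa using ((Real.hasDerivAt_sin y).fun_sub ((hasDerivAt_id y).fun_mul (Real.hasDerivAt_cos y)))
  · simp
  · intro y hy hyb
    exact mul_nonneg hy (Real.sin_nonneg_of_nonneg_of_le_pi hy hyb)

-- 2 - 2 cos x - x sin x ≥ 0 on [0, π]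
lemma aux2 : ∀ x : ℝ, 0 ≤ x → x ≤ Real.pi → 0 ≤ 2 - 2 * Real.cos x - x * Real.sin x := by
  apply nonneg_of_deriv_Icc (g := fun y => Real.sin y - y * Real.cos y)
  · intro y
    have h1 : HasDerivAt (fun y : ℝ => 2 - 2 * Real.cos y) (2 * Real.sin y) y := by
      simpa using ((Real.hasDerivAt_cos y).const_mul (2:ℝ)).const_sub 2
    have h2 : HasDerivAt (fun y : ℝ => y * Real.sin y) (Real.sin y + y * Real.cos y) y := by
      simpa using (hasDerivAt_id y).fun_mul (Real.hasDerivAt_sin y)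
    refine (h1.fun_sub h2).congr_deriv ?_
    show _ = Real.sin y - y * Real.cos y
    ring
  · simp
  · exact aux1

-- x(2+cos x) - 3 sin x ≥ 0 on [0, π]
lemma aux3 : ∀ x : ℝ, 0 ≤ x → x ≤ Real.pi → 0 ≤ x * (2 + Real.cos x) - 3 * Real.sin x := by
  apply nonneg_of_deriv_Icc (g := fun y => 2 - 2 * Real.cos y - y * Real.sin y)
  · intro y
    have h1 : HasDerivAt (fun y : ℝ => y * (2 + Real.cos y))
        ((2 + Real.cos y) + y * (-Real.sin y)) y := by
      simpa using (hasDerivAt_id y).fun_mul ((Real.hasDerivAt_cos y).const_add 2)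
    have h2 : HasDerivAt (fun y : ℝ => 3 * Real.sin y) (3 * Real.cos y) y := by
      simpa using (Real.hasDerivAt_sin y).const_mul (3:ℝ)
    refine (h1.fun_sub h2).congr_deriv ?_
    show _ = 2 - 2 * Real.cos y - y * Real.sin y
    ring
  · simp
  · exact aux2

lemma Psi_one_nonneg : ∀ x : ℝ, 0 ≤ x → 0 ≤ Psi 1 x := by
  intro x hx
  have hval : Psi 1 x = x * (2 + Real.cos x) - 3 * Real.sin x := by
    unfold Psi
    rw [Pf_one, Qf_one]
    push_cast
    ring
  rw [hval]
  rcases le_or_gt x Real.pi with h | h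
  · exact aux3 x hx h
  · have h1 : (3:ℝ) < x := lt_trans Real.pi_gt_three h
    nlinarith [Real.neg_one_le_cos x, Real.sin_le_one x]

lemma Psi_nonneg : ∀ n : ℕ, 1 ≤ n → ∀ x : ℝ, 0 ≤ x → 0 ≤ Psi n x := by
  intro n
  induction n with
  | zero => omega
  | succ m ih =>
    intro _ x hx
    rcases Nat.eq_zero_or_pos m with h | h
    · subst h; exact Psi_one_nonneg x hx
    · have hm : 1 ≤ m := h
      have hrec := hasDerivAt_Psi m
      have h0 : Psi (m+1) 0 = 0 := by
        unfold Psi Pf Qf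
        rw [Cf_zero]
        simp
      exact nonneg_of_deriv (g := fun y => ((m:ℝ)+1) * Psi m y) hrec h0
        (fun y hy => mul_nonneg (by positivity) (ih hm y hy)) x hx

noncomputable def Gt (n : ℕ) (x : ℝ) : ℝ :=
  x^(2*n) + n * x^n * Pf n x - ((n:ℝ)+1) * ((Pf n x)^2 + (Qf n x)^2)

lemma hasDerivAt_Gt (n : ℕ) (x : ℝ) :
    HasDerivAt (Gt (n+1)) (((n:ℝ)+1) * x^n * Psi (n+1) x) x := by
  have hP := hasDerivAt_Pf n x
  have hQ := hasDerivAt_Qf n x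
  have h1 : HasDerivAt (fun y : ℝ => y^(2*(n+1))) ((2*(n:ℝ)+2) * x^(2*n+1)) x := by
    have := hasDerivAt_pow (2*(n+1)) x
    have e : 2*(n+1)-1 = 2*n+1 := by omega
    rw [e] at this
    refine this.congr_deriv ?_
    push_cast; ring
  have h2 : HasDerivAt (fun y : ℝ => ((n:ℝ)+1) * y^(n+1) * Pf (n+1) y)
      ((((n:ℝ)+1) * (((n:ℝ)+1) * x^n)) * Pf (n+1) x
        + (((n:ℝ)+1) * x^(n+1)) * (((n:ℝ)+1) * x^n - Qf (n+1) x)) x := by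
    have := ((hasDerivAt_pow (n+1) x).const_mul ((n:ℝ)+1)).fun_mul hP
    simpa using this
  have h3 : HasDerivAt (fun y : ℝ => ((n:ℝ)+1+1) * ((Pf (n+1) y)^2 + (Qf (n+1) y)^2))
      (((n:ℝ)+1+1) * (2 * Pf (n+1) x * (((n:ℝ)+1) * x^n - Qf (n+1) x)
        + 2 * Qf (n+1) x * Pf (n+1) x)) x := by
    have hp2 : HasDerivAt (fun y : ℝ => (Pf (n+1) y)^2)
        (2 * Pf (n+1) x * (((n:ℝ)+1) * x^n - Qf (n+1) x)) x := by
      simpa using hP.fun_pow 2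
    have hq2 : HasDerivAt (fun y : ℝ => (Qf (n+1) y)^2)
        (2 * Qf (n+1) x * Pf (n+1) x) x := by
      simpa using hQ.fun_pow 2
    exact (hp2.add hq2).const_mul _
  have h := (h1.add h2).sub h3
  have hfun : ∀ y : ℝ, y^(2*(n+1)) + ((n:ℝ)+1) * y^(n+1) * Pf (n+1) y
      - ((n:ℝ)+1+1) * ((Pf (n+1) y)^2 + (Qf (n+1) y)^2) = Gt (n+1) y := by
    intro y; unfold Gt; push_cast; ring
  have heq : ((2*(n:ℝ)+2) * x^(2*n+1)
      + ((((n:ℝ)+1) * (((n:ℝ)+1) * x^n)) * Pf (n+1) x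
        + (((n:ℝ)+1) * x^(n+1)) * (((n:ℝ)+1) * x^n - Qf (n+1) x)))
      - (((n:ℝ)+1+1) * (2 * Pf (n+1) x * (((n:ℝ)+1) * x^n - Qf (n+1) x)
        + 2 * Qf (n+1) x * Pf (n+1) x))
      = ((n:ℝ)+1) * x^n * Psi (n+1) x := by
    unfold Psi
    push_cast
    ring
  rw [heq] at h
  have hfun2 : (fun y : ℝ => y^(2*(n+1)) + ((n:ℝ)+1) * y^(n+1) * Pf (n+1) y
      - ((n:ℝ)+1+1) * ((Pf (n+1) y)^2 + (Qf (n+1) y)^2)) = Gt (n+1) := funext hfun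
  rw [← hfun2]
  exact h

lemma Gt_nonneg (n : ℕ) : ∀ x : ℝ, 0 ≤ x → 0 ≤ Gt (n+1) x := by
  apply nonneg_of_deriv (g := fun y => ((n:ℝ)+1) * y^n * Psi (n+1) y)
  · exact hasDerivAt_Gt n
  · unfold Gt Pf Qf
    rw [Cf_zero]
    simp
  · intro y hy
    have := Psi_nonneg (n+1) (by omega) y hy
    positivity

lemma main_nonneg (m : ℕ) (x : ℝ) (hx : 0 ≤ x) :
    ‖Complex.exp (Complex.I * x)
        - ∑ k ∈ Finset.range (m+1), (Complex.I * x) ^ k / (Nat.factorial k)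
        - ((((m+1:ℕ)) : ℂ) / (2 * ((((m+1:ℕ)) : ℂ) + 1))) * (Complex.I * x) ^ (m+1) / (Nat.factorial (m+1))‖
      ≤ ((((m+1:ℕ)) : ℝ) + 2) / (2 * ((((m+1:ℕ)) : ℝ) + 1)) * |x| ^ (m+1) / (Nat.factorial (m+1)) := by
  set n := m + 1 with hn
  set c : ℝ := (n : ℝ) with hc
  have hc1 : (0:ℝ) < c + 1 := by positivity
  have hfacpos : (0:ℝ) < (Nat.factorial n : ℝ) := by
    exact_mod_cast Nat.factorial_pos n
  have hfC : ((Nat.factorial n : ℕ) : ℂ) ≠ 0 := by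
    exact_mod_cast Nat.factorial_ne_zero n
  have hbc : ((I:ℂ)^n) * ((-I)^n) = 1 := by
    rw [← mul_pow]; simp [mul_neg, Complex.I_mul_I]
  have hc1C : ((c:ℂ) + 1) ≠ 0 := by
    exact_mod_cast ne_of_gt hc1
  -- express E in terms of Cf
  have h1 : (I^n / ((Nat.factorial n) : ℂ)) * Cf n x
      = Complex.exp (I*(x:ℂ)) - ∑ k ∈ range n, (I*(x:ℂ))^k / (Nat.factorial k) := by
    unfold Cf
    calc (I^n / ((Nat.factorial n) : ℂ)) * ((-I)^n * (Nat.factorial n) *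
          (Complex.exp (I*(x:ℂ)) - ∑ k ∈ range n, (I*(x:ℂ))^k / (Nat.factorial k)))
        = (I^n * (-I)^n) * (Complex.exp (I*(x:ℂ)) - ∑ k ∈ range n, (I*(x:ℂ))^k / (Nat.factorial k))
          * ((Nat.factorial n : ℂ) / (Nat.factorial n : ℂ)) := by ring
      _ = Complex.exp (I*(x:ℂ)) - ∑ k ∈ range n, (I*(x:ℂ))^k / (Nat.factorial k) := by
          rw [hbc, div_self hfC]; ring
  have h2 : (((n:ℕ)) : ℂ) / (2 * ((((n:ℕ)) : ℂ) + 1)) * (Complex.I * x) ^ n / (Nat.factorial n)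
      = (I^n / ((Nat.factorial n) : ℂ)) * (((c / (2*(c+1)) : ℝ) : ℂ) * (x:ℂ)^n) := by
    rw [hc, mul_pow]
    push_cast
    field_simp
  have hE : Complex.exp (Complex.I * x)
        - ∑ k ∈ Finset.range n, (Complex.I * x) ^ k / (Nat.factorial k)
        - (((n:ℕ) : ℂ) / (2 * (((n:ℕ) : ℂ) + 1))) * (Complex.I * x) ^ n / (Nat.factorial n)
      = (I^n / ((Nat.factorial n) : ℂ)) * (Cf n x - ((c / (2*(c+1)) : ℝ) : ℂ) * (x:ℂ)^n) := by
    rw [mul_sub, h1, ← h2]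
  rw [hE, norm_mul, norm_div]
  simp only [norm_pow, Complex.norm_I, one_pow, Complex.norm_natCast]
  have habs : ‖Cf n x - ((c / (2*(c+1)) : ℝ) : ℂ) * (x:ℂ)^n‖
      ≤ (c + 2) / (2*(c+1)) * x^n := by
    rw [Complex.norm_def, Complex.normSq_apply]
    have hre : (Cf n x - ((c / (2*(c+1)) : ℝ) : ℂ) * (x:ℂ)^n).re
        = Pf n x - c / (2*(c+1)) * x^n := by
      rw [← Complex.ofReal_pow, ← Complex.ofReal_mul, Complex.sub_re, Complex.ofReal_re]
      rfl
    have him : (Cf n x - ((c / (2*(c+1)) : ℝ) : ℂ) * (x:ℂ)^n).im = Qf n x := by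
      rw [← Complex.ofReal_pow, ← Complex.ofReal_mul, Complex.sub_im, Complex.ofReal_im]
      simp [Qf]
    rw [hre, him]
    have hGt := Gt_nonneg m x hx
    have hp2 : x^(2*n) = (x^n)^2 := by rw [mul_comm, pow_mul]
    have key : ((c+2)/(2*(c+1)) * x^n)^2
        - ((Pf n x - c/(2*(c+1))*x^n) * (Pf n x - c/(2*(c+1))*x^n) + Qf n x * Qf n x)
        = Gt n x / (c+1) := by
      unfold Gt
      rw [hp2]
      field_simp
      ring
    have h2 : (Pf n x - c/(2*(c+1))*x^n) * (Pf n x - c/(2*(c+1))*x^n) + Qf n x * Qf n x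
        ≤ ((c+2)/(2*(c+1)) * x^n)^2 := by
      nlinarith [div_nonneg hGt (le_of_lt hc1)]
    have hRpos : (0:ℝ) ≤ (c+2)/(2*(c+1)) * x^n := by positivity
    calc Real.sqrt ((Pf n x - c/(2*(c+1))*x^n) * (Pf n x - c/(2*(c+1))*x^n) + Qf n x * Qf n x)
        ≤ Real.sqrt (((c+2)/(2*(c+1)) * x^n)^2) := Real.sqrt_le_sqrt h2
      _ = (c+2)/(2*(c+1)) * x^n := Real.sqrt_sq hRpos
  rw [one_div, inv_mul_eq_div]
  calc ‖Cf n x - ((c / (2*(c+1)) : ℝ) : ℂ) * (x:ℂ)^n‖ / (Nat.factorial n : ℝ)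
      ≤ ((c + 2) / (2*(c+1)) * x^n) / (Nat.factorial n : ℝ) := by
        gcongr
      _ = (((n:ℕ) : ℝ) + 2) / (2 * (((n:ℕ)) + 1)) * |x| ^ n / (Nat.factorial n) := by
        rw [_root_.abs_of_nonneg hx]

theorem prawitz_exp_I_bound (x : ℝ) (n : ℕ) (hn : 1 ≤ n) :
    ‖Complex.exp (Complex.I * x)
        - ∑ k ∈ Finset.range n, (Complex.I * x) ^ k / (Nat.factorial k)
        - ((n : ℂ) / (2 * ((n : ℂ) + 1))) * (Complex.I * x) ^ n / (Nat.factorial n)‖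
      ≤ (((n : ℝ) + 2) / (2 * ((n : ℝ) + 1))) * |x| ^ n / (Nat.factorial n) := by
  obtain ⟨m, rfl⟩ : ∃ m, n = m + 1 := ⟨n - 1, by omega⟩
  rcases le_or_gt 0 x with hx | hx
  · have h := main_nonneg m x hx
    push_cast at h ⊢
    exact h
  · have h := main_nonneg m (-x) (by linarith)
    have hconj : (starRingEnd ℂ) (Complex.exp (Complex.I * x)
          - ∑ k ∈ Finset.range (m+1), (Complex.I * x)^k / (Nat.factorial k)
          - (((m+1:ℕ):ℂ) / (2*(((m+1:ℕ):ℂ)+1))) * (Complex.I * x)^(m+1) / (Nat.factorial (m+1)))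
        = Complex.exp (Complex.I * ((-x:ℝ):ℂ))
          - ∑ k ∈ Finset.range (m+1), (Complex.I * ((-x:ℝ):ℂ))^k / (Nat.factorial k)
          - (((m+1:ℕ):ℂ) / (2*(((m+1:ℕ):ℂ)+1))) * (Complex.I * ((-x:ℝ):ℂ))^(m+1) / (Nat.factorial (m+1)) := by
      simp only [map_sub, map_div₀, map_mul, map_pow, map_sum, map_natCast, Complex.conj_I,
        Complex.conj_ofReal, map_add, map_one, map_ofNat, ← Complex.exp_conj,
        Complex.ofReal_neg, neg_mul, mul_neg]
    have habs : ‖Complex.exp (Complex.I * x)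
          - ∑ k ∈ Finset.range (m+1), (Complex.I * x)^k / (Nat.factorial k)
          - (((m+1:ℕ):ℂ) / (2*(((m+1:ℕ):ℂ)+1))) * (Complex.I * x)^(m+1) / (Nat.factorial (m+1))‖
        = ‖Complex.exp (Complex.I * ((-x:ℝ):ℂ))
          - ∑ k ∈ Finset.range (m+1), (Complex.I * ((-x:ℝ):ℂ))^k / (Nat.factorial k)
          - (((m+1:ℕ):ℂ) / (2*(((m+1:ℕ):ℂ)+1))) * (Complex.I * ((-x:ℝ):ℂ))^(m+1) / (Nat.factorial (m+1))‖ := by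
      rw [← hconj, Complex.norm_conj]
    push_cast at habs h ⊢
    rw [habs, show |x| = |(-x)| from (abs_neg x).symm]
    exact h
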